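/- Define the nonoverlapping two-subdomain Schwarz iteration in Fourier space for a fixed mode with symbol λ₀₁, λ₁₀ ∈ ℂ: the interface values satisfy P₀^{n+1} = ρ²·P₀^{n−1} with ρ² = [(λ₀₁ − d₁₀)(λ₁₀ − d₀₁)] / [(λ₀₁ + d₀₁)(λ₁₀ + d₁₀)], where d₀₁ = α·coth(αℓ₀₁), d₁₀ = α·coth(αℓ₁₀), α > 0, ℓ₀₁, ℓ₁₀ > 0, assuming the denominators are nonzero. In particular ρ = 0 if and only if (λ₀₁ − d₁₀)(λ₁₀ − d₀₁) = 0 whenever d₀₁, d₁₀ ≠ −λ₀₁, −λ₁₀. -/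
import Mathlib

open Real

noncomputable def coth (x : ℝ) : ℝ := Real.cosh x / Real.sinh x

/-- Nonoverlapping two-subdomain Schwarz iteration in Fourier space:
with DtN quantities `d₀₁ = α coth(αℓ₀₁)`, `d₁₀ = α coth(αℓ₁₀)`, the interface
traces satisfy `P₀^{n+2} = ρ² P₀^{n}` with
`ρ² = (λ₀₁-d₁₀)(λ₁₀-d₀₁)/((λ₀₁+d₀₁)(λ₁₀+d₁₀))`; moreover `ρ² = 0` iff
`(λ₀₁-d₁₀)(λ₁₀-d₀₁) = 0`. -/
theorem schwarz_convergence_factor (α ℓ01 ℓ10 : ℝ) (hα : 0 < α)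
    (h01 : 0 < ℓ01) (h10 : 0 < ℓ10) (lam01 lam10 : ℂ) (P0 P1 : ℕ → ℂ)
    (hd01 : lam01 + (α * coth (α * ℓ01) : ℝ) ≠ 0)
    (hd10 : lam10 + (α * coth (α * ℓ10) : ℝ) ≠ 0)
    (hit0 : ∀ n, P0 (n + 1) * (lam01 + (α * coth (α * ℓ01) : ℝ))
      = P1 n * (lam01 - (α * coth (α * ℓ10) : ℝ)))
    (hit1 : ∀ n, P1 (n + 1) * (lam10 + (α * coth (α * ℓ10) : ℝ))
      = P0 n * (lam10 - (α * coth (α * ℓ01) : ℝ))) :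
    (∀ n, P0 (n + 2) =
      ((lam01 - (α * coth (α * ℓ10) : ℝ)) * (lam10 - (α * coth (α * ℓ01) : ℝ)))
        / ((lam01 + (α * coth (α * ℓ01) : ℝ)) * (lam10 + (α * coth (α * ℓ10) : ℝ)))
      * P0 n) ∧
    (((lam01 - (α * coth (α * ℓ10) : ℝ)) * (lam10 - (α * coth (α * ℓ01) : ℝ)))
        / ((lam01 + (α * coth (α * ℓ01) : ℝ)) * (lam10 + (α * coth (α * ℓ10) : ℝ)))
      = 0
      ↔ (lam01 - (α * coth (α * ℓ10) : ℝ)) * (lam10 - (α * coth (α * ℓ01) : ℝ)) = 0) := by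
  constructor
  · intro n
    have h0 := hit0 (n + 1)
    have h1 := hit1 n
    rw [div_mul_eq_mul_div, eq_div_iff (mul_ne_zero hd01 hd10)]
    calc P0 (n + 2) * ((lam01 + (α * coth (α * ℓ01) : ℝ)) * (lam10 + (α * coth (α * ℓ10) : ℝ)))
        = (P0 (n + 2) * (lam01 + (α * coth (α * ℓ01) : ℝ))) * (lam10 + (α * coth (α * ℓ10) : ℝ)) := by ring
      _ = (P1 (n + 1) * (lam01 - (α * coth (α * ℓ10) : ℝ))) * (lam10 + (α * coth (α * ℓ10) : ℝ)) := by rw [h0]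
      _ = (P1 (n + 1) * (lam10 + (α * coth (α * ℓ10) : ℝ))) * (lam01 - (α * coth (α * ℓ10) : ℝ)) := by ring
      _ = (P0 n * (lam10 - (α * coth (α * ℓ01) : ℝ))) * (lam01 - (α * coth (α * ℓ10) : ℝ)) := by rw [h1]
      _ = (lam01 - (α * coth (α * ℓ10) : ℝ)) * (lam10 - (α * coth (α * ℓ01) : ℝ)) * P0 n := by ring
  · rw [div_eq_zero_iff]
    exact or_iff_left (mul_ne_zero hd01 hd10)
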